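/- Consider a C³ game with a finite user set, attention weights r₁ ≥ ⋯ ≥ rₙ ≥ 0 with r₁ > 0, played under the BRCM mechanism M[r₁,…,rₙ] whose functions are the constants f_k ≡ r_k. Then the exact potential equals the social welfare: P(s) = W(s) for every strategy profile s. Consequently, if every strategy set Sᵢ is finite and nonempty, every welfare-maximizing profile is a pure Nash equilibrium, so there exists a pure Nash equilibrium attaining the optimal social welfare. -/

import Mathlib

open MeasureTheory

/-- A score vector is "sorted" if it is nonincreasing and takes values in `[0,1]`. -/
def SortedScores (n : ℕ) (σ : Fin n → ℝ) : Prop :=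
  (∀ i j : Fin n, i ≤ j → σ j ≤ σ i) ∧ ∀ i, σ i ∈ Set.Icc (0:ℝ) 1

/-- The sorted score vector consisting of `k` ones followed by zeros. -/
def onesVec (n k : ℕ) : Fin n → ℝ := fun i => if (i : ℕ) < k then 1 else 0

/-- The defining hypotheses on the family `f₁, …, fₙ` of a Backward Rewarding
Mechanism: each `f k` is integrable on `[0,1]`, nonnegative on `[0,1]`,
pointwise nonincreasing in the index `k`, and `f₁ > 0` on `[0,1]`. -/
def BRMHyp {n : ℕ} (f : Fin n → ℝ → ℝ) : Prop :=
  (∀ k, IntervalIntegrable (f k) volume 0 1) ∧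
  (∀ k, ∀ t ∈ Set.Icc (0:ℝ) 1, 0 ≤ f k t) ∧
  (∀ k k' : Fin n, k ≤ k' → ∀ t ∈ Set.Icc (0:ℝ) 1, f k' t ≤ f k t) ∧
  (∀ k : Fin n, (k : ℕ) = 0 → ∀ t ∈ Set.Icc (0:ℝ) 1, 0 < f k t)

/-- `σ_{k+1}`, with the convention `σ_{n+1} = 0`. -/
def nextVal {n : ℕ} (σ : Fin n → ℝ) (k : Fin n) : ℝ :=
  if h : (k : ℕ) + 1 < n then σ ⟨(k : ℕ) + 1, h⟩ else 0

/-- The BRM reward of the creator at (0-indexed) rank `p` of the nonincreasing score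
vector `σ`: `∑_{k ≥ p} ∫_{σ_{k+1}}^{σ_k} f_k(t) dt`. -/
noncomputable def brmRankedN {n : ℕ} (f : Fin n → ℝ → ℝ) (σ : Fin n → ℝ) (p : ℕ) : ℝ :=
  ∑ k : Fin n, if p ≤ (k : ℕ) then ∫ t in (nextVal σ k)..(σ k), f k t else 0

/-- The BRM reward of the creator holding the `i`-th largest score of the
nonincreasing score vector `σ` (0-indexed). -/
noncomputable def brmRanked {n : ℕ} (f : Fin n → ℝ → ℝ) (σ : Fin n → ℝ) (i : Fin n) : ℝ :=
  brmRankedN f σ (i : ℕ)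

/-- The nonincreasing rearrangement of an arbitrary score vector:
`sortDesc σ k` is the `k`-th largest entry of `σ` (0-indexed). -/
noncomputable def sortDesc {n : ℕ} (σ : Fin n → ℝ) : Fin n → ℝ :=
  fun k => σ (Tuple.sort σ k.rev)

/-- The (0-indexed) rank of creator `i` in the score vector `σ`, ties broken by index. -/
noncomputable def rankCount {n : ℕ} (σ : Fin n → ℝ) (i : Fin n) : ℕ :=
  (Finset.univ.filter fun j => σ i < σ j ∨ (σ i = σ j ∧ j < i)).card

/-- Creator `i`'s BRM reward on an arbitrary score vector `σ ∈ [0,1]ⁿ`. -/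
noncomputable def brmRewardAt {n : ℕ} (f : Fin n → ℝ → ℝ) (σ : Fin n → ℝ) (i : Fin n) : ℝ :=
  brmRankedN f (sortDesc σ) (rankCount σ i)

/-- The BRM potential `Φ(σ) = ∑_k ∫₀^{σ_(k)} f_k(t) dt`. -/
noncomputable def brmPotential {n : ℕ} (f : Fin n → ℝ → ℝ) (σ : Fin n → ℝ) : ℝ :=
  ∑ k : Fin n, ∫ t in (0:ℝ)..(sortDesc σ k), f k t

/-- Creator `i`'s utility in a C³ game with finite user set `U` under the mechanism with
per-user rewards `brmRewardAt f`: total reward over all users minus the production cost. -/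
noncomputable def c3Utility {n : ℕ} {U : Type*} [Fintype U] (f : Fin n → ℝ → ℝ)
    (S : Fin n → Type*) (score : ∀ i, S i → U → ℝ) (c : ∀ i, S i → ℝ)
    (s : ∀ i, S i) (i : Fin n) : ℝ :=
  (∑ x : U, brmRewardAt f (fun j => score j (s j) x) i) - c i (s i)

/-- The potential `P(s) = ∑_x ∑_k ∫₀^{σ_(k)(x)} f_k(t) dt − ∑_i c_i(s_i)`. -/
noncomputable def c3Potential {n : ℕ} {U : Type*} [Fintype U] (f : Fin n → ℝ → ℝ)
    (S : Fin n → Type*) (score : ∀ i, S i → U → ℝ) (c : ∀ i, S i → ℝ)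
    (s : ∀ i, S i) : ℝ :=
  (∑ x : U, brmPotential f (fun j => score j (s j) x)) - ∑ i, c i (s i)

/-- Social welfare `W(s) = ∑_x ∑_k r_k σ_(k)(x) − ∑_i c_i(s_i)` of a C³ game with
attention weights `r`. -/
noncomputable def c3Welfare {n : ℕ} {U : Type*} [Fintype U] (r : Fin n → ℝ)
    (S : Fin n → Type*) (score : ∀ i, S i → U → ℝ) (c : ∀ i, S i → ℝ)
    (s : ∀ i, S i) : ℝ :=
  (∑ x : U, ∑ k : Fin n, r k * sortDesc (fun j => score j (s j) x) k) - ∑ i, c i (s i)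
section Aux
open Finset

variable {n : ℕ}

lemma sortDesc_anti (σ : Fin n → ℝ) : ∀ i j : Fin n, i ≤ j → sortDesc σ j ≤ sortDesc σ i := by
  intro i j hij
  exact Tuple.monotone_sort σ (Fin.rev_le_rev.mpr hij)

lemma sortDesc_map (σ : Fin n → ℝ) :
    Multiset.map (sortDesc σ) Finset.univ.val = Multiset.map σ Finset.univ.val := by
  have h : sortDesc σ = σ ∘ ⇑(Fin.revPerm.trans (Tuple.sort σ)) := rfl
  rw [h, ← Multiset.map_map, Multiset.map_univ_val_equiv]

lemma anti_eq_of_map_eq {a b : Fin n → ℝ}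
    (ha : ∀ i j : Fin n, i ≤ j → a j ≤ a i) (hb : ∀ i j : Fin n, i ≤ j → b j ≤ b i)
    (h : Multiset.map a Finset.univ.val = Multiset.map b Finset.univ.val) : a = b := by
  have h' : ((List.ofFn a : List ℝ) : Multiset ℝ) = ((List.ofFn b : List ℝ) : Multiset ℝ) := by
    rw [← Fin.univ_val_map, ← Fin.univ_val_map]; exact h
  have hp : (List.ofFn a).Perm (List.ofFn b) := Quotient.exact h'
  have sa : List.Pairwise (· ≥ ·) (List.ofFn a) :=
    List.pairwise_ofFn.mpr (fun i j hij => ha i j (le_of_lt hij))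
  have sb : List.Pairwise (· ≥ ·) (List.ofFn b) :=
    List.pairwise_ofFn.mpr (fun i j hij => hb i j (le_of_lt hij))
  have heq := List.Perm.eq_of_pairwise' sa sb hp
  exact List.ofFn_injective heq

lemma lower_iff (S : Finset (Fin n)) (h : ∀ k ∈ S, ∀ k' : Fin n, k' ≤ k → k' ∈ S) (k : Fin n) :
    k ∈ S ↔ (k : ℕ) < S.card := by
  constructor
  · intro hk
    have hsub : Finset.Iic k ⊆ S := fun m hm => h k hk m (Finset.mem_Iic.mp hm)
    have := Finset.card_le_card hsub
    rw [Fin.card_Iic] at this; omega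
  · intro hk
    by_contra hks
    have hsub : S ⊆ Finset.Iio k := by
      intro m hm
      rw [Finset.mem_Iio]
      by_contra hmk
      exact hks (h m hm k (le_of_not_gt hmk))
    have := Finset.card_le_card hsub
    rw [Fin.card_Iio] at this; omega

lemma count_transfer (σ : Fin n → ℝ) (q : ℝ → Prop) [DecidablePred q] :
    (Finset.univ.filter fun k => q (sortDesc σ k)).card
      = (Finset.univ.filter fun j => q (σ j)).card := by
  have h := sortDesc_map σ
  have h1 : ∀ (f : Fin n → ℝ),
      (Finset.univ.filter fun k => q (f k)).card
        = Multiset.countP q (Multiset.map f Finset.univ.val) := by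
    intro f
    rw [Multiset.countP_map]
    simp [Finset.card, Finset.filter, Multiset.countP_eq_card_filter]
  rw [h1, h1, h]

lemma rank_bounds (σ : Fin n → ℝ) (i : Fin n) :
    (Finset.univ.filter fun j => σ i < σ j).card ≤ rankCount σ i ∧
      rankCount σ i < (Finset.univ.filter fun j => σ i ≤ σ j).card := by
  constructor
  · apply Finset.card_le_card
    intro j hj
    simp only [Finset.mem_filter, Finset.mem_univ, true_and] at hj ⊢
    exact Or.inl hj
  · apply Finset.card_lt_card
    rw [Finset.ssubset_iff_of_subset]
    · exact ⟨i, by simp, by simp⟩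
    · intro j hj
      simp only [Finset.mem_filter, Finset.mem_univ, true_and] at hj ⊢
      rcases hj with h | ⟨h, _⟩
      · exact le_of_lt h
      · exact le_of_eq h

lemma rank_lt (σ : Fin n → ℝ) (i : Fin n) : rankCount σ i < n := by
  have h := (rank_bounds σ i).2
  have := Finset.card_filter_le Finset.univ (fun j => σ i ≤ σ j)
  simp only [Finset.card_univ, Fintype.card_fin] at this
  omega

lemma sortDesc_rank (σ : Fin n → ℝ) (i : Fin n) :
    sortDesc σ ⟨rankCount σ i, rank_lt σ i⟩ = σ i := by
  set τ := sortDesc σ with hτ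
  have hlow : ∀ (q : ℝ → Prop) [DecidablePred q], (∀ u v : ℝ, q u → u ≤ v → q v) →
      ∀ k : Fin n, q (τ k) ↔ (k : ℕ) < (Finset.univ.filter fun j => q (σ j)).card := by
    intro q _ hq k
    rw [← count_transfer σ q]
    have := lower_iff (Finset.univ.filter fun k => q (τ k)) ?_ k
    · simpa using this
    · intro m hm m' hm'
      simp only [Finset.mem_filter, Finset.mem_univ, true_and] at hm ⊢
      exact hq _ _ hm (sortDesc_anti σ m' m hm')
  have h1 := hlow (fun t => σ i < t) (fun u v hu huv => lt_of_lt_of_le hu huv)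
    ⟨rankCount σ i, rank_lt σ i⟩
  have h2 := hlow (fun t => σ i ≤ t) (fun u v hu huv => le_trans hu huv)
    ⟨rankCount σ i, rank_lt σ i⟩
  have hb := rank_bounds σ i
  simp only at h1 h2
  have hna : ¬ σ i < τ ⟨rankCount σ i, rank_lt σ i⟩ := by
    rw [h1]; omega
  have hge : σ i ≤ τ ⟨rankCount σ i, rank_lt σ i⟩ := by
    rw [h2]; omega
  linarith [lt_of_le_of_ne hge]

/-- Auxiliary: the sorted vector with the entry at position `p` removed and a `0` appended. -/
noncomputable def skipVec (p : ℕ) (τ : Fin n → ℝ) : Fin n → ℝ :=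
  fun k => if (k : ℕ) < p then τ k else nextVal τ k

lemma skip_anti (τ : Fin n → ℝ) (hτ : ∀ i j : Fin n, i ≤ j → τ j ≤ τ i)
    (h0 : ∀ k, 0 ≤ τ k) (p : ℕ) :
    ∀ i j : Fin n, i ≤ j → skipVec p τ j ≤ skipVec p τ i := by
  intro k k' h
  have hkk : (k : ℕ) ≤ (k' : ℕ) := h
  unfold skipVec nextVal
  by_cases hk : (k : ℕ) < p
  · by_cases hk' : (k' : ℕ) < p
    · simp only [hk, hk', if_true]
      exact hτ k k' h
    · simp only [hk, hk', if_true, if_false]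
      by_cases h2 : (k' : ℕ) + 1 < n
      · rw [dif_pos h2]
        exact hτ k ⟨(k' : ℕ) + 1, h2⟩ (by rw [Fin.le_def]; simp; omega)
      · rw [dif_neg h2]
        exact h0 k
  · have hk' : ¬ (k' : ℕ) < p := by omega
    simp only [hk, hk', if_false]
    by_cases h2 : (k' : ℕ) + 1 < n
    · have h3 : (k : ℕ) + 1 < n := by omega
      rw [dif_pos h2, dif_pos h3]
      exact hτ ⟨(k : ℕ) + 1, h3⟩ ⟨(k' : ℕ) + 1, h2⟩ (by rw [Fin.le_def]; simp; omega)
    · rw [dif_neg h2]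
      by_cases h3 : (k : ℕ) + 1 < n
      · rw [dif_pos h3]; exact h0 _
      · rw [dif_neg h3]

lemma map_update_zero (σ : Fin n → ℝ) (i : Fin n) :
    Multiset.map (Function.update σ i 0) Finset.univ.val
      = 0 ::ₘ Multiset.map σ (Finset.univ.val.erase i) := by
  have hu : (Finset.univ.val : Multiset (Fin n)) = i ::ₘ Finset.univ.val.erase i :=
    (Multiset.cons_erase (Finset.mem_univ_val i)).symm
  conv_lhs => rw [hu]
  rw [Multiset.map_cons, Function.update_self]
  congr 1
  apply Multiset.map_congr rfl
  intro j hj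
  have hji : j ≠ i := ((Finset.univ.nodup).mem_erase_iff.mp hj).1
  exact Function.update_of_ne hji 0 σ

lemma key_eq (σ : Fin n → ℝ) (hσ : ∀ j, 0 ≤ σ j) (i : Fin n) :
    sortDesc (Function.update σ i 0) = skipVec (rankCount σ i) (sortDesc σ) := by
  set p : ℕ := rankCount σ i with hp
  have hpn : p < n := rank_lt σ i
  set pf : Fin n := ⟨p, hpn⟩ with hpf
  set τ : Fin n → ℝ := sortDesc σ with hτd
  have hτ : ∀ i j : Fin n, i ≤ j → τ j ≤ τ i := sortDesc_anti σ
  have hτ0 : ∀ k, 0 ≤ τ k := by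
    intro k
    have : τ k ∈ Multiset.map σ Finset.univ.val := by
      rw [← sortDesc_map σ]
      exact Multiset.mem_map_of_mem _ (Finset.mem_univ_val k)
    obtain ⟨j, _, hj⟩ := Multiset.mem_map.mp this
    rw [← hj]; exact hσ j
  apply anti_eq_of_map_eq (sortDesc_anti _) (skip_anti τ hτ hτ0 p)
  -- permutation e
  set e : Fin n → Fin n := fun k =>
    if (k : ℕ) < p then k else if h2 : (k : ℕ) + 1 < n then ⟨(k : ℕ) + 1, h2⟩ else pf with he
  have hcomp : skipVec p τ = (Function.update τ pf 0) ∘ e := by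
    funext k
    simp only [he, skipVec, nextVal, Function.comp_apply]
    by_cases hk : (k : ℕ) < p
    · rw [if_pos hk, if_pos hk]
      exact (Function.update_of_ne (by simp [hpf, Fin.ne_iff_vne]; omega) 0 τ).symm
    · rw [if_neg hk, if_neg hk]
      by_cases h2 : (k : ℕ) + 1 < n
      · rw [dif_pos h2, dif_pos h2]
        exact (Function.update_of_ne (by simp [hpf, Fin.ne_iff_vne]; omega) 0 τ).symm
      · rw [dif_neg h2, dif_neg h2, Function.update_self]
  have hinj : Function.Injective e := by
    intro a b hab
    simp only [he] at hab
    by_cases ha : (a : ℕ) < p <;> by_cases hb : (b : ℕ) < p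
    · rw [if_pos ha, if_pos hb] at hab; exact hab
    · rw [if_pos ha, if_neg hb] at hab
      by_cases h2 : (b : ℕ) + 1 < n
      · rw [dif_pos h2] at hab
        have := congrArg Fin.val hab
        simp at this; omega
      · rw [dif_neg h2] at hab
        have := congrArg Fin.val hab
        simp [hpf] at this; omega
    · rw [if_neg ha, if_pos hb] at hab
      by_cases h2 : (a : ℕ) + 1 < n
      · rw [dif_pos h2] at hab
        have := congrArg Fin.val hab
        simp at this; omega
      · rw [dif_neg h2] at hab
        have := congrArg Fin.val hab
        simp [hpf] at this; omega
    · rw [if_neg ha, if_neg hb] at hab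
      by_cases h2 : (a : ℕ) + 1 < n <;> by_cases h3 : (b : ℕ) + 1 < n
      · rw [dif_pos h2, dif_pos h3] at hab
        have := congrArg Fin.val hab
        simp at this
        exact Fin.ext (by omega)
      · rw [dif_pos h2, dif_neg h3] at hab
        have := congrArg Fin.val hab
        simp [hpf] at this; omega
      · rw [dif_neg h2, dif_pos h3] at hab
        have := congrArg Fin.val hab
        simp [hpf] at this; omega
      · have := a.isLt
        have := b.isLt
        exact Fin.ext (by omega)
  have hmape : Multiset.map e Finset.univ.val = Finset.univ.val :=
    (Multiset.bijective_iff_map_univ_eq_univ e).mp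
      ((Finite.injective_iff_bijective).mp hinj)
  calc Multiset.map (sortDesc (Function.update σ i 0)) Finset.univ.val
      = Multiset.map (Function.update σ i 0) Finset.univ.val := sortDesc_map _
    _ = 0 ::ₘ Multiset.map σ (Finset.univ.val.erase i) := map_update_zero σ i
    _ = 0 ::ₘ Multiset.map τ (Finset.univ.val.erase pf) := by
        congr 1
        have h1 : (σ i) ::ₘ Multiset.map σ (Finset.univ.val.erase i)
            = (τ pf) ::ₘ Multiset.map τ (Finset.univ.val.erase pf) := by
          rw [← Multiset.map_cons, ← Multiset.map_cons,
            Multiset.cons_erase (Finset.mem_univ_val i),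
            Multiset.cons_erase (Finset.mem_univ_val pf), sortDesc_map σ]
        have hv : τ pf = σ i := sortDesc_rank σ i
        rw [hv] at h1
        exact (Multiset.cons_inj_right (σ i)).mp h1
    _ = Multiset.map (Function.update τ pf 0) Finset.univ.val := (map_update_zero τ pf).symm
    _ = Multiset.map (Function.update τ pf 0) (Multiset.map e Finset.univ.val) := by rw [hmape]
    _ = Multiset.map (skipVec p τ) Finset.univ.val := by
        rw [Multiset.map_map, ← hcomp]

lemma brm_reward_eq (r : Fin n → ℝ) (σ : Fin n → ℝ) (hσ : ∀ j, 0 ≤ σ j) (i : Fin n) :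
    brmRewardAt (fun k (_ : ℝ) => r k) σ i =
      brmPotential (fun k (_ : ℝ) => r k) σ
        - brmPotential (fun k (_ : ℝ) => r k) (Function.update σ i 0) := by
  unfold brmRewardAt brmRankedN brmPotential
  rw [key_eq σ hσ i, ← Finset.sum_sub_distrib]
  apply Finset.sum_congr rfl
  intro k _
  rw [intervalIntegral.integral_const, intervalIntegral.integral_const,
    intervalIntegral.integral_const]
  simp only [smul_eq_mul, sub_zero]
  by_cases hk : rankCount σ i ≤ (k : ℕ)
  · rw [if_pos hk]
    have : skipVec (rankCount σ i) (sortDesc σ) k = nextVal (sortDesc σ) k := by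
      unfold skipVec; rw [if_neg (by omega)]
    rw [this]; ring
  · rw [if_neg hk]
    have : skipVec (rankCount σ i) (sortDesc σ) k = sortDesc σ k := by
      unfold skipVec; rw [if_pos (by omega)]
    rw [this]; ring

lemma brmPot_const (r : Fin n → ℝ) (σ : Fin n → ℝ) :
    brmPotential (fun k (_ : ℝ) => r k) σ = ∑ k : Fin n, r k * sortDesc σ k := by
  unfold brmPotential
  apply Finset.sum_congr rfl
  intro k _
  rw [intervalIntegral.integral_const]
  simp [smul_eq_mul, mul_comm]

lemma util_eq {U : Type*} [Fintype U] (r : Fin n → ℝ)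
    (S : Fin n → Type*) (score : ∀ i, S i → U → ℝ) (c : ∀ i, S i → ℝ)
    (hscore : ∀ i a x, 0 ≤ score i a x) (s : ∀ i, S i) (i : Fin n) :
    c3Utility (fun k (_ : ℝ) => r k) S score c s i =
      c3Potential (fun k (_ : ℝ) => r k) S score c s
        - (∑ x : U, brmPotential (fun k (_ : ℝ) => r k)
            (Function.update (fun j => score j (s j) x) i 0))
        + ∑ j ∈ Finset.univ.erase i, c j (s j) := by
  unfold c3Utility c3Potential
  have h1 : ∀ x : U, brmRewardAt (fun k (_ : ℝ) => r k) (fun j => score j (s j) x) i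
      = brmPotential (fun k (_ : ℝ) => r k) (fun j => score j (s j) x)
        - brmPotential (fun k (_ : ℝ) => r k)
            (Function.update (fun j => score j (s j) x) i 0) :=
    fun x => brm_reward_eq r _ (fun j => hscore j (s j) x) i
  rw [Finset.sum_congr rfl (fun x _ => h1 x), Finset.sum_sub_distrib]
  have h2 : ∑ j, c j (s j) = c i (s i) + ∑ j ∈ Finset.univ.erase i, c j (s j) :=
    (Finset.add_sum_erase _ _ (Finset.mem_univ i)).symm
  rw [h2]; ring

end Aux

/-- Under the BRCM mechanism `M[r₁,…,rₙ]` (constant functions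
`f_k ≡ r_k` with `r₁ ≥ ⋯ ≥ rₙ ≥ 0`, `r₁ > 0`), the exact potential equals the social
welfare; consequently, when all strategy sets are finite and nonempty, every
welfare-maximizing profile is a pure Nash equilibrium and a welfare-optimal pure Nash
equilibrium exists. -/
theorem stmt12 {n : ℕ} {U : Type*} [Fintype U]
    (S : Fin n → Type*) [∀ i, Fintype (S i)] [∀ i, Nonempty (S i)]
    (score : ∀ i, S i → U → ℝ) (c : ∀ i, S i → ℝ)
    (hscore : ∀ i a x, score i a x ∈ Set.Icc (0:ℝ) 1)
    (r : Fin n → ℝ)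
    (hmono : ∀ k k' : Fin n, k ≤ k' → r k' ≤ r k)
    (hnonneg : ∀ k, 0 ≤ r k)
    (hpos : ∀ k : Fin n, (k : ℕ) = 0 → 0 < r k) :
    (∀ s : ∀ i, S i,
        c3Potential (fun k (_ : ℝ) => r k) S score c s = c3Welfare r S score c s) ∧
    (∀ s : ∀ i, S i,
        (∀ s' : ∀ i, S i, c3Welfare r S score c s' ≤ c3Welfare r S score c s) →
        ∀ (i : Fin n) (s'i : S i),
          c3Utility (fun k (_ : ℝ) => r k) S score c (Function.update s i s'i) i ≤
            c3Utility (fun k (_ : ℝ) => r k) S score c s i) ∧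
    ∃ s : ∀ i, S i,
      (∀ (i : Fin n) (s'i : S i),
          c3Utility (fun k (_ : ℝ) => r k) S score c (Function.update s i s'i) i ≤
            c3Utility (fun k (_ : ℝ) => r k) S score c s i) ∧
      ∀ s' : ∀ i, S i, c3Welfare r S score c s' ≤ c3Welfare r S score c s := by
  have hsc0 : ∀ i a x, 0 ≤ score i a x := fun i a x => (hscore i a x).1
  have part1 : ∀ s : ∀ i, S i,
      c3Potential (fun k (_ : ℝ) => r k) S score c s = c3Welfare r S score c s := by
    intro s
    unfold c3Potential c3Welfare
    congr 1
    exact Finset.sum_congr rfl fun x _ => brmPot_const r _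
  have part2 : ∀ s : ∀ i, S i,
      (∀ s' : ∀ i, S i, c3Welfare r S score c s' ≤ c3Welfare r S score c s) →
      ∀ (i : Fin n) (s'i : S i),
        c3Utility (fun k (_ : ℝ) => r k) S score c (Function.update s i s'i) i ≤
          c3Utility (fun k (_ : ℝ) => r k) S score c s i := by
    intro s hmax i s'i
    rw [util_eq r S score c hsc0 s i, util_eq r S score c hsc0 _ i]
    have hA : ∀ x : U,
        Function.update (fun j => score j ((Function.update s i s'i) j) x) i 0
          = Function.update (fun j => score j (s j) x) i 0 := by
      intro x; funext j
      by_cases hj : j = i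
      · subst hj; simp
      · rw [Function.update_of_ne hj, Function.update_of_ne hj, Function.update_of_ne hj]
    have hT : (∑ x : U, brmPotential (fun k (_ : ℝ) => r k)
          (Function.update (fun j => score j ((Function.update s i s'i) j) x) i 0))
        = ∑ x : U, brmPotential (fun k (_ : ℝ) => r k)
            (Function.update (fun j => score j (s j) x) i 0) :=
      Finset.sum_congr rfl fun x _ => by rw [hA x]
    have hB : ∑ j ∈ Finset.univ.erase i, c j (Function.update s i s'i j)
        = ∑ j ∈ Finset.univ.erase i, c j (s j) :=
      Finset.sum_congr rfl fun j hj => by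
        rw [Function.update_of_ne (Finset.mem_erase.mp hj).1]
    have hC : c3Potential (fun k (_ : ℝ) => r k) S score c (Function.update s i s'i)
        ≤ c3Potential (fun k (_ : ℝ) => r k) S score c s := by
      rw [part1, part1]; exact hmax _
    rw [hT, hB]
    linarith
  obtain ⟨s, -, hs⟩ := Finset.exists_max_image (Finset.univ : Finset (∀ i, S i))
    (c3Welfare r S score c) Finset.univ_nonempty
  exact ⟨part1, part2, s, part2 s (fun s' => hs s' (Finset.mem_univ s')),
    fun s' => hs s' (Finset.mem_univ s')⟩
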